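/- Let D = (X, B) be a covering design and let w be a normalised weighting of X such that L(D, w) < 1. Then for each point x in X, the replication number r_x is at least 2 and w(x) <= (r_x * L(D, w) - 1) / (r_x - 1). -/

import Mathlib

open Finset

/-- Let `D = (X, B)` be a covering design (with at least two points, so every point
must lie in some block) and `w` a normalised weighting of `X` with `L(D, w) < 1`.
Then for each `x ∈ X` the replication number `r_x` is at least `2` and
`w(x) ≤ (r_x * L(D, w) - 1) / (r_x - 1)`. -/

private lemma sum_biUnion_le_aux {ι α : Type*} [DecidableEq ι] [DecidableEq α] (s : Finset ι)
    (t : ι → Finset α) (f : α → ℝ) (hf : ∀ a, 0 ≤ f a) :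
    ∑ a ∈ s.biUnion t, f a ≤ ∑ i ∈ s, ∑ a ∈ t i, f a := by
  induction s using Finset.induction with
  | empty => simp
  | insert a s h ih =>
    rw [Finset.biUnion_insert, Finset.sum_insert h]
    have hsplit := Finset.sum_union_inter (s₁ := t a) (s₂ := s.biUnion t) (f := f)
    have hnn : 0 ≤ ∑ x ∈ t a ∩ s.biUnion t, f x := Finset.sum_nonneg fun x _ => hf x
    linarith

theorem stmt3 {α : Type*} [DecidableEq α] {ι : Type*} [Fintype ι]
    (X : Finset α) (blk : ι → Finset α)
    (hX : 2 ≤ X.card)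
    (hsub : ∀ i, blk i ⊆ X)
    (hcov : ∀ x ∈ X, ∀ y ∈ X, x ≠ y → ∃ i, x ∈ blk i ∧ y ∈ blk i)
    (w : α → ℝ) (hw0 : ∀ x ∈ X, 0 ≤ w x) (hw1 : ∑ x ∈ X, w x = 1)
    (ℓ : ℝ) (hℓ : IsGreatest {r : ℝ | ∃ i, r = ∑ x ∈ blk i, w x} ℓ)
    (hℓ1 : ℓ < 1) :
    ∀ x ∈ X,
      2 ≤ (univ.filter fun i => x ∈ blk i).card ∧
      w x ≤ (((univ.filter fun i => x ∈ blk i).card : ℝ) * ℓ - 1) /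
        (((univ.filter fun i => x ∈ blk i).card : ℝ) - 1) := by
  classical
  intro x hx
  set S : Finset ι := univ.filter fun i => x ∈ blk i with hS
  have hmemS : ∀ i, i ∈ S ↔ x ∈ blk i := by
    intro i; simp [hS]
  -- block sums are ≤ ℓ
  have hble : ∀ i, ∑ z ∈ blk i, w z ≤ ℓ := fun i => hℓ.2 ⟨i, rfl⟩
  -- r ≥ 2
  have hr2 : 2 ≤ S.card := by
    by_contra h
    push_neg at h
    interval_cases hc : S.card
    · -- card = 0 : but some block contains x and another point
      obtain ⟨y, hy, hxy⟩ : ∃ y ∈ X, y ≠ x := by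
        obtain ⟨y, hy, z, hz, hne⟩ := Finset.one_lt_card.mp hX
        rcases eq_or_ne y x with rfl | h'
        · exact ⟨z, hz, hne.symm⟩
        · exact ⟨y, hy, h'⟩
      obtain ⟨i, hxi, _⟩ := hcov x hx y hy (Ne.symm hxy)
      have : i ∈ S := (hmemS i).mpr hxi
      simp [Finset.card_eq_zero.mp hc] at this
    · -- card = 1 : the unique block is all of X
      obtain ⟨i0, hi0⟩ := Finset.card_eq_one.mp hc
      have hxall : X ⊆ blk i0 := by
        intro y hy
        rcases eq_or_ne y x with rfl | hne
        · have : i0 ∈ S := hi0 ▸ Finset.mem_singleton_self i0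
          exact (hmemS i0).mp this
        · obtain ⟨i, hxi, hyi⟩ := hcov x hx y hy (Ne.symm hne)
          have : i ∈ S := (hmemS i).mpr hxi
          rw [hi0, Finset.mem_singleton] at this
          exact this ▸ hyi
      have hblkX : blk i0 = X := Finset.Subset.antisymm (hsub i0) hxall
      have : (1 : ℝ) ≤ ℓ := by
        have := hble i0
        rw [hblkX, hw1] at this
        exact this
      linarith
  refine ⟨hr2, ?_⟩
  have hrR : (2 : ℝ) ≤ (S.card : ℝ) := by exact_mod_cast hr2
  -- key inequality : S.card * w x + (1 - w x) ≤ S.card * ℓ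
  have hupper : ∑ i ∈ S, ∑ z ∈ blk i, w z ≤ (S.card : ℝ) * ℓ := by
    calc ∑ i ∈ S, ∑ z ∈ blk i, w z ≤ ∑ i ∈ S, ℓ :=
          Finset.sum_le_sum fun i _ => hble i
      _ = (S.card : ℝ) * ℓ := by rw [Finset.sum_const, nsmul_eq_mul]
  have hlower : (S.card : ℝ) * w x + (1 - w x) ≤ ∑ i ∈ S, ∑ z ∈ blk i, w z := by
    have hsplit : ∀ i ∈ S, ∑ z ∈ blk i, w z = w x + ∑ z ∈ (blk i).erase x, w z := by
      intro i hi
      rw [Finset.add_sum_erase _ _ ((hmemS i).mp hi)]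
    rw [Finset.sum_congr rfl hsplit, Finset.sum_add_distrib, Finset.sum_const, nsmul_eq_mul]
    have hXsub : X.erase x ⊆ S.biUnion fun i => (blk i).erase x := by
      intro y hy
      obtain ⟨hyx, hyX⟩ := Finset.mem_erase.mp hy
      obtain ⟨i, hxi, hyi⟩ := hcov x hx y hyX (Ne.symm hyx)
      exact Finset.mem_biUnion.mpr ⟨i, (hmemS i).mpr hxi, Finset.mem_erase.mpr ⟨hyx, hyi⟩⟩
    have h1 : (1 : ℝ) - w x = ∑ y ∈ X.erase x, w y := by
      have := Finset.add_sum_erase X w hx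
      linarith [this.symm ▸ hw1]
    have h2 : ∑ y ∈ X.erase x, w y ≤ ∑ i ∈ S, ∑ z ∈ (blk i).erase x, w z := by
      set w' : α → ℝ := fun y => if y ∈ X then w y else 0 with hw'
      have hw'nn : ∀ y, 0 ≤ w' y := by
        intro y; by_cases h : y ∈ X <;> simp [hw', h, hw0 y]
      have heq : ∀ (T : Finset α), T ⊆ X → ∑ y ∈ T, w y = ∑ y ∈ T, w' y := by
        intro T hT
        exact Finset.sum_congr rfl fun y hy => by simp [hw', hT hy]
      rw [heq _ ((Finset.erase_subset _ _))]
      calc ∑ y ∈ X.erase x, w' y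
          ≤ ∑ y ∈ S.biUnion (fun i => (blk i).erase x), w' y :=
            Finset.sum_le_sum_of_subset_of_nonneg hXsub fun y _ _ => hw'nn y
        _ ≤ ∑ i ∈ S, ∑ z ∈ (blk i).erase x, w' z :=
            sum_biUnion_le_aux _ _ _ hw'nn
        _ = ∑ i ∈ S, ∑ z ∈ (blk i).erase x, w z := by
            exact Finset.sum_congr rfl fun i _ =>
              (heq _ ((Finset.erase_subset _ _).trans (hsub i))).symm
      
    linarith [h1 ▸ h2]
  have hkey : ((S.card : ℝ) - 1) * w x ≤ (S.card : ℝ) * ℓ - 1 := by linarith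
  rw [div_eq_inv_mul, ← div_eq_inv_mul]
  rw [le_div_iff₀ (by linarith : (0:ℝ) < (S.card : ℝ) - 1)]
  linarith [hkey]
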